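/- Let q be a prime power, ℓ ≤ m be positive integers, and let F ∈ Mat_{ℓ×m}(F_q) have rank(F) = r with 1 ≤ r ≤ ℓ. Then the number of matrices M ∈ Mat_{ℓ×m}(F_q) with rank(M) = 1 and trace(Fᵀ M) ≠ 0 equals q^{ℓ+m−r−1}(q^r − 1). In particular, these ℓ values for r = 1, …, ℓ are strictly increasing in r, so the determinantal code C(1;ℓ,m) has exactly ℓ distinct nonzero weights. -/

import Mathlib

open Matrix

section Aux

variable {K : Type*} [Field K] [Fintype K]

omit [Fintype K] in
lemma rank_pos_of_ne {a b : ℕ} (A : Matrix (Fin a) (Fin b) K) {i j} (h : A i j ≠ 0) :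
    0 < A.rank := by
  rw [Matrix.rank]
  rw [Module.finrank_pos_iff_exists_ne_zero]
  refine ⟨⟨A.mulVec (Pi.single j 1), LinearMap.mem_range_self _ _⟩, ?_⟩
  simp only [ne_eq, Submodule.mk_eq_zero]
  intro hz
  apply h
  have := congrFun (show A *ᵥ Pi.single j 1 = 0 from congrArg Subtype.val hz) i
  rw [Matrix.mulVec_single_one] at this
  simpa using this

lemma card_mulVec_ker {a b : ℕ} (A : Matrix (Fin a) (Fin b) K)
    [Fintype {x : Fin b → K // A.mulVec x = 0}] :
    Fintype.card {x : Fin b → K // A.mulVec x = 0} =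
      Fintype.card K ^ (b - A.rank) := by
  classical
  haveI : Fintype (LinearMap.ker A.mulVecLin) := Fintype.ofFinite _
  have h1 : Fintype.card {x : Fin b → K // A.mulVec x = 0}
      = Fintype.card (LinearMap.ker A.mulVecLin) := by
    apply Fintype.card_congr
    exact Equiv.subtypeEquivRight (fun x => by simp [LinearMap.mem_ker])
  rw [h1, Module.card_eq_pow_finrank (K := K)]
  congr 1
  have h2 := LinearMap.finrank_range_add_finrank_ker A.mulVecLin
  rw [Module.finrank_pi, Fintype.card_fin] at h2
  have : Module.finrank K (LinearMap.range A.mulVecLin) = A.rank := rfl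
  omega

omit [Fintype K] in
lemma trace_vecMulVec {a b : ℕ} (F : Matrix (Fin a) (Fin b) K) (x : Fin a → K) (y : Fin b → K) :
    Matrix.trace (Fᵀ * vecMulVec x y) = (vecMul x F) ⬝ᵥ y := by
  simp only [Matrix.trace, Matrix.diag, Matrix.mul_apply, Matrix.transpose_apply,
    Matrix.vecMulVec_apply, Matrix.vecMul, dotProduct, Finset.sum_mul]
  refine Finset.sum_congr rfl fun j _ => Finset.sum_congr rfl fun i _ => by ring

omit [Fintype K] in
lemma rank_vecMulVec_one {a b : ℕ} {x : Fin a → K} {y : Fin b → K}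
    (hx : x ≠ 0) (hy : y ≠ 0) : (vecMulVec x y).rank = 1 := by
  classical
  obtain ⟨i, hi⟩ := Function.ne_iff.mp hx
  obtain ⟨j, hj⟩ := Function.ne_iff.mp hy
  have h1 : 0 < (vecMulVec x y).rank := by
    apply rank_pos_of_ne (i := i) (j := j)
    simp only [Matrix.vecMulVec_apply]
    exact mul_ne_zero (by simpa using hi) (by simpa using hj)
  have h2 : (vecMulVec x y).rank ≤ 1 := by
    rw [Matrix.vecMulVec_eq (Fin 1)]
    calc (replicateCol (Fin 1) x * replicateRow (Fin 1) y).rank ≤ (replicateCol (Fin 1) x).rank :=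
          Matrix.rank_mul_le_left _ _
      _ ≤ Fintype.card (Fin 1) := Matrix.rank_le_card_width _
      _ = 1 := by simp
  omega

omit [Fintype K] in
lemma exists_vecMulVec {a b : ℕ} {M : Matrix (Fin a) (Fin b) K} (h : M.rank = 1) :
    ∃ (x : Fin a → K) (y : Fin b → K), M = vecMulVec x y := by
  classical
  rw [Matrix.rank, finrank_eq_one_iff'] at h
  obtain ⟨⟨v, hv⟩, -, hspan⟩ := h
  choose c hc using fun j => hspan ⟨M.mulVec (Pi.single j 1), LinearMap.mem_range_self _ _⟩
  refine ⟨v, c, ?_⟩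
  ext i j
  have := congrFun (congrArg Subtype.val (hc j)) i
  simp only [Submodule.coe_smul, Pi.smul_apply, smul_eq_mul] at this
  rw [Matrix.mulVec_single_one] at this
  simp only [Matrix.col_apply] at this
  simp only [Matrix.vecMulVec_apply]
  rw [← this]
  ring

lemma card_dot_ker {m : ℕ} (w : Fin m → K) (hw : w ≠ 0)
    [Fintype {y : Fin m → K // w ⬝ᵥ y = 0}] :
    Fintype.card {y : Fin m → K // w ⬝ᵥ y = 0} = Fintype.card K ^ (m - 1) := by
  classical
  have hcongr : Fintype.card {y : Fin m → K // w ⬝ᵥ y = 0}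
      = Fintype.card {y : Fin m → K // (Matrix.replicateRow (Fin 1) w).mulVec y = 0} := by
    apply Fintype.card_congr
    apply Equiv.subtypeEquivRight
    intro y
    constructor
    · intro h; ext u; simp [Matrix.mulVec, Matrix.replicateRow_apply, h]
    · intro h
      have := congrFun h 0
      simpa [Matrix.mulVec, Matrix.replicateRow_apply] using this
  rw [hcongr, card_mulVec_ker]
  congr 2
  obtain ⟨j, hj⟩ := Function.ne_iff.mp hw
  have h1 : 0 < (Matrix.replicateRow (Fin 1) w).rank :=
    rank_pos_of_ne (i := 0) (j := j) _ (by simpa [Matrix.replicateRow_apply] using hj)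
  have h2 : (Matrix.replicateRow (Fin 1) w).rank ≤ 1 := by
    have := Matrix.rank_le_card_height (Matrix.replicateRow (Fin 1) w)
    simpa using this
  omega

lemma card_sigma_subtype {X Y : Type*} [Fintype X] [Fintype Y] (P : X → Y → Prop)
    [Fintype {p : X × Y // P p.1 p.2}] [∀ x, Fintype {y : Y // P x y}] :
    Fintype.card {p : X × Y // P p.1 p.2} = ∑ x : X, Fintype.card {y : Y // P x y} := by
  have h1 : Fintype.card {p : X × Y // P p.1 p.2}
      = Fintype.card ((x : X) × {y : Y // P x y}) :=
    Fintype.card_congr ⟨fun q => ⟨q.1.1, q.1.2, q.2⟩, fun s => ⟨(s.1, s.2.1), s.2.2⟩,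
      fun _ => rfl, fun _ => rfl⟩
  rw [h1, Fintype.card_sigma]

end Aux

/-- If `F` has rank `r` with `1 ≤ r ≤ ℓ`, then the number of rank-one matrices `M` with
`trace (Fᵀ * M) ≠ 0` equals `q ^ (ℓ + m - r - 1) * (q ^ r - 1)`; moreover, these values are
strictly increasing in `r`, so the determinantal code `C(1; ℓ, m)` has exactly `ℓ` distinct
nonzero weights. -/
theorem det_code_weights_t_one (K : Type*) [Field K] [Fintype K] (q ℓ m r : ℕ)
    (hq : Fintype.card K = q) (hℓ : 0 < ℓ) (hℓm : ℓ ≤ m) (hr1 : 1 ≤ r) (hrℓ : r ≤ ℓ)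
    (F : Matrix (Fin ℓ) (Fin m) K) (hF : F.rank = r) :
    Nat.card {M : Matrix (Fin ℓ) (Fin m) K // M.rank = 1 ∧ Matrix.trace (Fᵀ * M) ≠ 0} =
      q ^ (ℓ + m - r - 1) * (q ^ r - 1) ∧
    ∀ r₁ r₂ : ℕ, 1 ≤ r₁ → r₁ < r₂ → r₂ ≤ ℓ →
      q ^ (ℓ + m - r₁ - 1) * (q ^ r₁ - 1) < q ^ (ℓ + m - r₂ - 1) * (q ^ r₂ - 1) := by
  classical
  have hq2 : 2 ≤ q := hq ▸ Fintype.one_lt_card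
  constructor
  · -- the counting part
    set A : Finset ((Fin ℓ → K) × (Fin m → K)) :=
      Finset.univ.filter (fun p => (vecMul p.1 F) ⬝ᵥ p.2 ≠ 0) with hA
    set B : Finset (Matrix (Fin ℓ) (Fin m) K) :=
      Finset.univ.filter (fun M => M.rank = 1 ∧ Matrix.trace (Fᵀ * M) ≠ 0) with hB
    -- vecMulVec maps A into B
    have hmaps : ∀ p ∈ A, vecMulVec p.1 p.2 ∈ B := by
      rintro ⟨x, y⟩ hp
      rw [hA, Finset.mem_filter] at hp
      have hdot : (vecMul x F) ⬝ᵥ y ≠ 0 := hp.2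
      have hx : x ≠ 0 := by rintro rfl; simp at hdot
      have hy : y ≠ 0 := by rintro rfl; simp at hdot
      rw [hB, Finset.mem_filter]
      exact ⟨Finset.mem_univ _, rank_vecMulVec_one hx hy, by rwa [_root_.trace_vecMulVec]⟩
    have hfib := Finset.card_eq_sum_card_fiberwise hmaps
    -- each fiber has q - 1 elements
    have hfibcard : ∀ M ∈ B, (A.filter (fun p => vecMulVec p.1 p.2 = M)).card = q - 1 := by
      intro M hM
      rw [hB, Finset.mem_filter] at hM
      obtain ⟨-, hrk, htr⟩ := hM
      obtain ⟨x₀, y₀, rfl⟩ := exists_vecMulVec hrk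
      have hdot₀ : (vecMul x₀ F) ⬝ᵥ y₀ ≠ 0 := by rwa [_root_.trace_vecMulVec] at htr
      have hx₀ : x₀ ≠ 0 := by rintro rfl; simp at hdot₀
      have hy₀ : y₀ ≠ 0 := by rintro rfl; simp at hdot₀
      obtain ⟨i₀, hi₀⟩ := Function.ne_iff.mp hx₀
      obtain ⟨j₀, hj₀⟩ := Function.ne_iff.mp hy₀
      have hi₀' : x₀ i₀ ≠ 0 := by simpa using hi₀
      have hj₀' : y₀ j₀ ≠ 0 := by simpa using hj₀
      have key1 : (Finset.univ.filter (fun c : K => c ≠ 0)).card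
          = (A.filter (fun p => vecMulVec p.1 p.2 = vecMulVec x₀ y₀)).card := by
        apply Finset.card_bij (fun c _ => (c • x₀, c⁻¹ • y₀))
        · -- maps into
          intro c hc
          rw [Finset.mem_filter] at hc ⊢
          have hc0 : c ≠ 0 := by simpa using hc
          have heq : vecMulVec (c • x₀) (c⁻¹ • y₀) = vecMulVec x₀ y₀ := by
            ext i j
            simp only [Matrix.vecMulVec_apply, Pi.smul_apply, smul_eq_mul]
            field_simp
          refine ⟨?_, heq⟩
          rw [hA, Finset.mem_filter]
          refine ⟨Finset.mem_univ _, ?_⟩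
          show (vecMul (c • x₀) F) ⬝ᵥ (c⁻¹ • y₀) ≠ 0
          rw [← _root_.trace_vecMulVec, heq, _root_.trace_vecMulVec]
          exact hdot₀
        · -- injective
          intro c hc c' hc' h
          have := congrFun (congrArg Prod.fst h) i₀
          simp only [Pi.smul_apply, smul_eq_mul] at this
          exact mul_right_cancel₀ hi₀' this
        · -- surjective
          rintro ⟨x, y⟩ hp
          rw [Finset.mem_filter] at hp
          obtain ⟨hpA, heq⟩ := hp
          have heq' : ∀ i j, x i * y j = x₀ i * y₀ j := by
            intro i j
            have := congrFun (congrFun heq i) j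
            simpa [Matrix.vecMulVec_apply] using this
          have key : x i₀ * y j₀ ≠ 0 := by
            rw [heq' i₀ j₀]; exact mul_ne_zero hi₀' hj₀'
          have hxi₀ : x i₀ ≠ 0 := fun h => key (by rw [h, zero_mul])
          have hyj₀ : y j₀ ≠ 0 := fun h => key (by rw [h, mul_zero])
          refine ⟨x i₀ / x₀ i₀, by simp [div_ne_zero hxi₀ hi₀'], ?_⟩
          have hc0 : x i₀ / x₀ i₀ ≠ 0 := div_ne_zero hxi₀ hi₀'
          have hx_eq : ∀ i, x i = (x i₀ / x₀ i₀) * x₀ i := by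
            intro i
            have e1 := heq' i j₀
            have e2 := heq' i₀ j₀
            have h3 : (x i * x₀ i₀) * y j₀ = (x i₀ * x₀ i) * y j₀ := by
              linear_combination x₀ i₀ * e1 - x₀ i * e2
            have h4 : x i * x₀ i₀ = x i₀ * x₀ i := mul_right_cancel₀ hyj₀ h3
            field_simp
            linear_combination h4
          have hy_eq : ∀ j, y j = (x i₀ / x₀ i₀)⁻¹ * y₀ j := by
            intro j
            have e1 := heq' i₀ j
            field_simp
            linear_combination e1
          ext
          · simp only [Pi.smul_apply, smul_eq_mul]
            exact (hx_eq _).symm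
          · simp only [Pi.smul_apply, smul_eq_mul]
            exact (hy_eq _).symm
      rw [← key1]
      have key2 : (Finset.univ.filter (fun c : K => c ≠ 0)).card
          = Fintype.card {c : K // c ≠ 0} := (Fintype.card_subtype _).symm
      rw [key2, ← Nat.card_eq_fintype_card, ← Nat.card_congr unitsEquivNeZero,
        Nat.card_eq_fintype_card, Fintype.card_units, hq]
    -- hence A.card = B.card * (q - 1)
    have hAB : A.card = B.card * (q - 1) := by
      rw [hfib, Finset.sum_congr rfl hfibcard, Finset.sum_const, smul_eq_mul]
    -- now compute A.card
    have hy_count : ∀ w : Fin m → K, w ≠ 0 →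
        Fintype.card {y : Fin m → K // w ⬝ᵥ y ≠ 0} = q ^ m - q ^ (m - 1) := by
      intro w hw
      calc Fintype.card {y : Fin m → K // w ⬝ᵥ y ≠ 0}
          = Fintype.card (Fin m → K) - Fintype.card {y : Fin m → K // w ⬝ᵥ y = 0} :=
            Fintype.card_subtype_compl _
        _ = q ^ m - q ^ (m - 1) := by
            rw [card_dot_ker w hw, Fintype.card_fun, Fintype.card_fin, hq]
    have hx_count : Fintype.card {x : Fin ℓ → K // vecMul x F ≠ 0} = q ^ ℓ - q ^ (ℓ - r) := by
      have hker : Fintype.card {x : Fin ℓ → K // vecMul x F = 0} = q ^ (ℓ - r) := by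
        have hcongr : Fintype.card {x : Fin ℓ → K // vecMul x F = 0}
            = Fintype.card {x : Fin ℓ → K // Fᵀ.mulVec x = 0} :=
          Fintype.card_congr (Equiv.subtypeEquivRight (fun x => by
            rw [Matrix.mulVec_transpose]))
        rw [hcongr, card_mulVec_ker, Matrix.rank_transpose, hF, hq]
      calc Fintype.card {x : Fin ℓ → K // vecMul x F ≠ 0}
          = Fintype.card (Fin ℓ → K) - Fintype.card {x : Fin ℓ → K // vecMul x F = 0} :=
            Fintype.card_subtype_compl _
        _ = q ^ ℓ - q ^ (ℓ - r) := by
            rw [hker, Fintype.card_fun, Fintype.card_fin, hq]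
    have hAcard : A.card = (q ^ ℓ - q ^ (ℓ - r)) * (q ^ m - q ^ (m - 1)) := by
      have h1 : A.card = Fintype.card {p : (Fin ℓ → K) × (Fin m → K) //
          (vecMul p.1 F) ⬝ᵥ p.2 ≠ 0} := (Fintype.card_subtype _).symm
      rw [h1, card_sigma_subtype (fun (x : Fin ℓ → K) (y : Fin m → K) => (vecMul x F) ⬝ᵥ y ≠ 0)]
      have h2 : ∀ x : Fin ℓ → K, Fintype.card {y : Fin m → K // (vecMul x F) ⬝ᵥ y ≠ 0}
          = if vecMul x F ≠ 0 then q ^ m - q ^ (m - 1) else 0 := by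
        intro x
        split_ifs with h
        · exact hy_count _ h
        · push_neg at h
          rw [Fintype.card_eq_zero_iff]
          constructor
          rintro ⟨y, hy⟩
          exact hy (by rw [h, zero_dotProduct])
      calc (∑ x : Fin ℓ → K, Fintype.card {y : Fin m → K // (vecMul x F) ⬝ᵥ y ≠ 0})
          = ∑ x : Fin ℓ → K, if vecMul x F ≠ 0 then q ^ m - q ^ (m - 1) else 0 :=
            Finset.sum_congr rfl (fun x _ => h2 x)
        _ = ∑ x ∈ Finset.univ.filter (fun x : Fin ℓ → K => vecMul x F ≠ 0),
              (q ^ m - q ^ (m - 1)) := (Finset.sum_filter _ _).symm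
        _ = (q ^ ℓ - q ^ (ℓ - r)) * (q ^ m - q ^ (m - 1)) := by
            rw [Finset.sum_const, smul_eq_mul, ← Fintype.card_subtype, hx_count]
    -- final arithmetic
    have hsub1 : q ^ ℓ - q ^ (ℓ - r) = q ^ (ℓ - r) * (q ^ r - 1) := by
      rw [Nat.mul_sub, mul_one, ← pow_add]
      congr 2
      omega
    have hsub2 : q ^ m - q ^ (m - 1) = q ^ (m - 1) * (q - 1) := by
      rw [Nat.mul_sub, mul_one, ← pow_succ]
      congr 2
      omega
    have hfinal : B.card * (q - 1) = (q ^ (ℓ + m - r - 1) * (q ^ r - 1)) * (q - 1) := by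
      rw [← hAB, hAcard, hsub1, hsub2,
        show ℓ + m - r - 1 = (ℓ - r) + (m - 1) by omega, pow_add]
      ring
    have hBcard : B.card = q ^ (ℓ + m - r - 1) * (q ^ r - 1) :=
      Nat.eq_of_mul_eq_mul_right (by omega) hfinal
    rw [Nat.card_eq_fintype_card, Fintype.card_subtype]
    exact hB ▸ hBcard
  · -- monotonicity
    intro r₁ r₂ h1 h12 h2ℓ
    have e1 : q ^ (ℓ + m - r₁ - 1) * (q ^ r₁ - 1) = q ^ (ℓ + m - 1) - q ^ (ℓ + m - r₁ - 1) := by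
      rw [Nat.mul_sub, mul_one, ← pow_add]
      congr 2
      omega
    have e2 : q ^ (ℓ + m - r₂ - 1) * (q ^ r₂ - 1) = q ^ (ℓ + m - 1) - q ^ (ℓ + m - r₂ - 1) := by
      rw [Nat.mul_sub, mul_one, ← pow_add]
      congr 2
      omega
    rw [e1, e2]
    have hlt : q ^ (ℓ + m - r₂ - 1) < q ^ (ℓ + m - r₁ - 1) :=
      Nat.pow_lt_pow_right (by omega) (by omega)
    have hle : q ^ (ℓ + m - r₁ - 1) ≤ q ^ (ℓ + m - 1) :=
      Nat.pow_le_pow_right (by omega) (by omega)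
    omega
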